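/- Monotonicity of the value function for the random-arrival model (Lemma 5). If V : X → ℝ is monotone with respect to ⪯, then the Bellman-updated function X ↦ min_{w∈W} J_V(X, w) is also monotone with respect to ⪯. Consequently, fixing a reference state X† ∈ X, every iterate of the relative value iteration V_1 ≡ 0, V_{n+1}(X) = min_{w∈W} J_{V_n}(X, w) − min_{w∈W} J_{V_n}(X†, w) is monotone, and any pointwise limit V of the sequence satisfies: for X¹, X² ∈ X with A²_{b,k} ≥ A¹_{b,k}, A²_{d,k} ≥ A¹_{d,k}, A²_{r,k} ≥ A¹_{r,k} and D²_k = D¹_k for all k, V(X²) ≥ V(X¹). -/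

import Mathlib

namespace AoIRandom

/-- Per-device control action: idle `(0,0)`, continue the current
in-transmission update `(1,1)`, or start transmitting the buffered update
`(1,2)`. -/
inductive Act : Type
  | idle : Act
  | cont : Act
  | new  : Act
  deriving DecidableEq

instance : Fintype Act :=
  ⟨{Act.idle, Act.cont, Act.new}, by intro a; cases a <;> simp⟩

/-- Per-device state `(A_b, A_d, A_r, D)`. -/
abbrev S : Type := ℕ × ℕ × ℕ × ℕ

/-- Success successor under `(1,1)` when a new update arrives. -/
def sCont1 (L Ahd Ahr : ℕ) (x : S) : S :=
  if x.2.2.2 = 1 then (1, 1, min (x.2.1 + 1) Ahr, L)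
  else (1, min (x.2.1 + 1) Ahd, min (x.2.2.1 + 1) Ahr, x.2.2.2 - 1)

/-- Success successor under `(1,1)` when no update arrives. -/
def sCont2 (L Ahb Ahd Ahr : ℕ) (x : S) : S :=
  if x.2.2.2 = 1 then
    (min (x.1 + 1) Ahb, min (x.1 + 1) Ahd, min (x.2.1 + 1) Ahr, L)
  else
    (min (x.1 + 1) Ahb, min (x.2.1 + 1) Ahd, min (x.2.2.1 + 1) Ahr, x.2.2.2 - 1)

/-- Failure successor under `(1,1)` when a new update arrives; this is also the
unscheduled successor `X¹_{k,un}` under `(0,0)`. -/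
def fCont1 (Ahd Ahr : ℕ) (x : S) : S :=
  (1, min (x.2.1 + 1) Ahd, min (x.2.2.1 + 1) Ahr, x.2.2.2)

/-- Failure successor under `(1,1)` when no update arrives; this is also the
unscheduled successor `X²_{k,un}` under `(0,0)`. -/
def fCont2 (Ahb Ahd Ahr : ℕ) (x : S) : S :=
  (min (x.1 + 1) Ahb, min (x.2.1 + 1) Ahd, min (x.2.2.1 + 1) Ahr, x.2.2.2)

/-- Success successor under `(1,2)` when a new update arrives. -/
def sNew1 (L Ahr : ℕ) (x : S) : S := (1, 1, min (x.2.2.1 + 1) Ahr, L - 1)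

/-- Success successor under `(1,2)` when no update arrives. -/
def sNew2 (L Ahb Ahd Ahr : ℕ) (x : S) : S :=
  (min (x.1 + 1) Ahb, min (x.1 + 1) Ahd, min (x.2.2.1 + 1) Ahr, L - 1)

/-- Failure successor under `(1,2)` when a new update arrives. -/
def fNew1 (L Ahr : ℕ) (x : S) : S := (1, 1, min (x.2.2.1 + 1) Ahr, L)

/-- Failure successor under `(1,2)` when no update arrives. -/
def fNew2 (L Ahb Ahd Ahr : ℕ) (x : S) : S :=
  (min (x.1 + 1) Ahb, min (x.1 + 1) Ahd, min (x.2.2.1 + 1) Ahr, L)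

/-- Per-device transition kernel `P_k(x' | x, a)` in the random-arrival model. -/
def Pk (lam rho : ℝ) (L Ahb Ahd Ahr : ℕ) (x x' : S) : Act → ℝ
  | Act.idle =>
      rho * (if x' = fCont1 Ahd Ahr x then 1 else 0) +
        (1 - rho) * (if x' = fCont2 Ahb Ahd Ahr x then 1 else 0)
  | Act.cont =>
      rho * lam * (if x' = sCont1 L Ahd Ahr x then 1 else 0) +
        rho * (1 - lam) * (if x' = fCont1 Ahd Ahr x then 1 else 0) +
        (1 - rho) * lam * (if x' = sCont2 L Ahb Ahd Ahr x then 1 else 0) +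
        (1 - rho) * (1 - lam) * (if x' = fCont2 Ahb Ahd Ahr x then 1 else 0)
  | Act.new =>
      rho * lam * (if x' = sNew1 L Ahr x then 1 else 0) +
        rho * (1 - lam) * (if x' = fNew1 L Ahr x then 1 else 0) +
        (1 - rho) * lam * (if x' = sNew2 L Ahb Ahd Ahr x then 1 else 0) +
        (1 - rho) * (1 - lam) * (if x' = fNew2 L Ahb Ahd Ahr x then 1 else 0)

/-- Per-device state space `{0,…,Âb} × {0,…,Âd} × {0,…,Âr} × {1,…,L}`. -/
def spaceS (L Ahb Ahd Ahr : ℕ) : Finset S :=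
  Finset.range (Ahb + 1) ×ˢ
    (Finset.range (Ahd + 1) ×ˢ (Finset.range (Ahr + 1) ×ˢ Finset.Icc 1 L))

/-- Joint state space `X = X_1 × ⋯ × X_K`. -/
def jointSpace {K : ℕ} (L Ahb Ahd Ahr : Fin K → ℕ) : Finset (Fin K → S) :=
  Fintype.piFinset fun k => spaceS (L k) (Ahb k) (Ahd k) (Ahr k)

/-- Joint transition kernel `P(X' | X, w) = ∏ₖ P_k(X'_k | X_k, w_k)`. -/
def Pjoint {K : ℕ} (lam rho : Fin K → ℝ) (L Ahb Ahd Ahr : Fin K → ℕ)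
    (x x' : Fin K → S) (w : Fin K → Act) : ℝ :=
  ∏ k, Pk (lam k) (rho k) (L k) (Ahb k) (Ahd k) (Ahr k) (x k) (x' k) (w k)

/-- Feasible joint actions: at most `M` devices are scheduled. -/
def feasible (K M : ℕ) : Finset (Fin K → Act) :=
  Finset.univ.filter fun w => (Finset.univ.filter fun k => w k ≠ Act.idle).card ≤ M

lemma feasible_nonempty (K M : ℕ) : (feasible K M).Nonempty := by
  refine ⟨fun _ => Act.idle, Finset.mem_filter.mpr ⟨Finset.mem_univ _, ?_⟩⟩
  simp

/-- The state–action cost `J_V(X, w) = Σₖ A_{r,k} + Σ_{X'∈X} P(X'|X,w) V(X')`. -/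
def J {K : ℕ} (lam rho : Fin K → ℝ) (L Ahb Ahd Ahr : Fin K → ℕ)
    (V : (Fin K → S) → ℝ) (x : Fin K → S) (w : Fin K → Act) : ℝ :=
  (∑ k, ((x k).2.2.1 : ℝ)) +
    ∑ x' ∈ jointSpace L Ahb Ahd Ahr, Pjoint lam rho L Ahb Ahd Ahr x x' w * V x'

/-- Componentwise order on per-device states: `A¹_b ≤ A²_b`, `A¹_d ≤ A²_d`,
`A¹_r ≤ A²_r` and `D¹ = D²`. -/
def xleS (x y : S) : Prop :=
  x.1 ≤ y.1 ∧ x.2.1 ≤ y.2.1 ∧ x.2.2.1 ≤ y.2.2.1 ∧ x.2.2.2 = y.2.2.2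


/-- Successor state selected by a branch `(arrival?, success?)`. -/
def succ (L Ahb Ahd Ahr : ℕ) (a : Act) (b : Bool × Bool) (x : S) : S :=
  match a, b with
  | Act.idle, (true, _)  => fCont1 Ahd Ahr x
  | Act.idle, (false, _) => fCont2 Ahb Ahd Ahr x
  | Act.cont, (true, true)   => sCont1 L Ahd Ahr x
  | Act.cont, (true, false)  => fCont1 Ahd Ahr x
  | Act.cont, (false, true)  => sCont2 L Ahb Ahd Ahr x
  | Act.cont, (false, false) => fCont2 Ahb Ahd Ahr x
  | Act.new, (true, true)   => sNew1 L Ahr x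
  | Act.new, (true, false)  => fNew1 L Ahr x
  | Act.new, (false, true)  => sNew2 L Ahb Ahd Ahr x
  | Act.new, (false, false) => fNew2 L Ahb Ahd Ahr x

/-- Branch probability. -/
def coef (lam rho : ℝ) (b : Bool × Bool) : ℝ :=
  (if b.1 then rho else 1 - rho) * (if b.2 then lam else 1 - lam)

lemma coef_nonneg {lam rho : ℝ} (hlam : 0 ≤ lam ∧ lam ≤ 1)
    (hrho : 0 ≤ rho ∧ rho ≤ 1) (b : Bool × Bool) : 0 ≤ coef lam rho b := by
  unfold coef
  have := hlam.1; have := hlam.2; have := hrho.1; have := hrho.2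
  rcases b with ⟨b1, b2⟩ <;> cases b1 <;> cases b2 <;> dsimp <;> nlinarith

lemma Pk_eq_sum (lam rho : ℝ) (L Ahb Ahd Ahr : ℕ) (x x' : S) (a : Act) :
    Pk lam rho L Ahb Ahd Ahr x x' a =
      ∑ b : Bool × Bool, coef lam rho b *
        (if x' = succ L Ahb Ahd Ahr a b x then 1 else 0) := by
  cases a <;>
    simp only [Fintype.sum_prod_type, Fintype.sum_bool] <;> delta succ <;>
    simp only [Pk, coef, Fintype.sum_prod_type, Fintype.sum_bool,
      Bool.false_eq_true, if_true, if_false] <;>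
    ring

lemma mem_spaceS_iff {L Ahb Ahd Ahr : ℕ} {x : S} :
    x ∈ spaceS L Ahb Ahd Ahr ↔
      x.1 ≤ Ahb ∧ x.2.1 ≤ Ahd ∧ x.2.2.1 ≤ Ahr ∧ 1 ≤ x.2.2.2 ∧ x.2.2.2 ≤ L := by
  simp [spaceS, Finset.mem_product, Nat.lt_succ_iff, and_assoc]

lemma succ_mem {L Ahb Ahd Ahr : ℕ} (hL : 2 ≤ L) (hAb : 1 ≤ Ahb)
    (hAd : 1 ≤ Ahd) (hAr : 1 ≤ Ahr) (a : Act) (b : Bool × Bool) {x : S}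
    (hx : x ∈ spaceS L Ahb Ahd Ahr) :
    succ L Ahb Ahd Ahr a b x ∈ spaceS L Ahb Ahd Ahr := by
  rw [mem_spaceS_iff] at hx ⊢
  obtain ⟨h1, h2, h3, h4, h5⟩ := hx
  rcases b with ⟨b1, b2⟩
  cases a <;> cases b1 <;> cases b2 <;>
    simp only [succ, sCont1, sCont2, fCont1, fCont2, sNew1, sNew2, fNew1,
      fNew2] <;> (try split_ifs) <;> (try simp) <;> omega

lemma succ_mono {L Ahb Ahd Ahr : ℕ} (a : Act) (b : Bool × Bool) {x y : S}
    (hxy : xleS x y) :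
    xleS (succ L Ahb Ahd Ahr a b x) (succ L Ahb Ahd Ahr a b y) := by
  obtain ⟨h1, h2, h3, h4⟩ := hxy
  rcases b with ⟨b1, b2⟩
  cases a <;> cases b1 <;> cases b2 <;>
    simp only [succ, sCont1, sCont2, fCont1, fCont2, sNew1, sNew2, fNew1,
      fNew2, xleS] <;> (try split_ifs) <;> (try simp_all) <;> omega

/-- The collapsed form of the expected continuation value. -/
lemma sum_Pjoint_mul {K : ℕ} (lam rho : Fin K → ℝ) (L Ahb Ahd Ahr : Fin K → ℕ)
    (hL : ∀ k, 2 ≤ L k) (hAb : ∀ k, 1 ≤ Ahb k) (hAd : ∀ k, 1 ≤ Ahd k)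
    (hAr : ∀ k, 1 ≤ Ahr k) (V : (Fin K → S) → ℝ) {x : Fin K → S}
    (hx : x ∈ jointSpace L Ahb Ahd Ahr) (w : Fin K → Act) :
    ∑ x' ∈ jointSpace L Ahb Ahd Ahr, Pjoint lam rho L Ahb Ahd Ahr x x' w * V x'
      = ∑ β ∈ Fintype.piFinset (fun _ : Fin K => (Finset.univ : Finset (Bool × Bool))),
          (∏ k, coef (lam k) (rho k) (β k)) *
            V (fun k => succ (L k) (Ahb k) (Ahd k) (Ahr k) (w k) (β k) (x k)) := by
  have hmem : ∀ β : Fin K → Bool × Bool,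
      (fun k => succ (L k) (Ahb k) (Ahd k) (Ahr k) (w k) (β k) (x k)) ∈
        jointSpace L Ahb Ahd Ahr := by
    intro β
    rw [jointSpace, Fintype.mem_piFinset]
    intro k
    exact succ_mem (hL k) (hAb k) (hAd k) (hAr k) _ _
      ((Fintype.mem_piFinset.mp hx) k)
  calc
    ∑ x' ∈ jointSpace L Ahb Ahd Ahr, Pjoint lam rho L Ahb Ahd Ahr x x' w * V x'
      = ∑ x' ∈ jointSpace L Ahb Ahd Ahr,
          ∑ β ∈ Fintype.piFinset (fun _ : Fin K => (Finset.univ : Finset (Bool × Bool))),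
            (if x' = fun k => succ (L k) (Ahb k) (Ahd k) (Ahr k) (w k) (β k) (x k)
              then (∏ k, coef (lam k) (rho k) (β k)) * V x' else 0) := by
        refine Finset.sum_congr rfl fun x' _ => ?_
        rw [Pjoint]
        conv_lhs =>
          rw [show (∏ k, Pk (lam k) (rho k) (L k) (Ahb k) (Ahd k) (Ahr k) (x k) (x' k) (w k))
              = ∏ k, ∑ b : Bool × Bool, coef (lam k) (rho k) b *
                  (if x' k = succ (L k) (Ahb k) (Ahd k) (Ahr k) (w k) b (x k) then 1 else 0)
            from Finset.prod_congr rfl fun k _ => Pk_eq_sum _ _ _ _ _ _ _ _ _]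
        rw [Finset.prod_univ_sum, Finset.sum_mul]
        refine Finset.sum_congr rfl fun β _ => ?_
        rw [Finset.prod_mul_distrib, Finset.prod_boole]
        have : (∀ k ∈ Finset.univ,
            x' k = succ (L k) (Ahb k) (Ahd k) (Ahr k) (w k) (β k) (x k)) ↔
            x' = fun k => succ (L k) (Ahb k) (Ahd k) (Ahr k) (w k) (β k) (x k) := by
          simp [funext_iff]
        by_cases h : x' = fun k => succ (L k) (Ahb k) (Ahd k) (Ahr k) (w k) (β k) (x k)
        · rw [if_pos (this.mpr h), if_pos h]; ring
        · rw [if_neg (fun hc => h (this.mp hc)), if_neg h]; ring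
    _ = ∑ β ∈ Fintype.piFinset (fun _ : Fin K => (Finset.univ : Finset (Bool × Bool))),
          ∑ x' ∈ jointSpace L Ahb Ahd Ahr,
            (if x' = fun k => succ (L k) (Ahb k) (Ahd k) (Ahr k) (w k) (β k) (x k)
              then (∏ k, coef (lam k) (rho k) (β k)) * V x' else 0) :=
        Finset.sum_comm
    _ = _ := by
        refine Finset.sum_congr rfl fun β _ => ?_
        rw [Finset.sum_ite_eq' (jointSpace L Ahb Ahd Ahr), if_pos (hmem β)]

/-- Lemma 5: the Bellman update preserves monotonicity in the
random-arrival model; consequently every relative-value-iteration iterate is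
monotone and any pointwise limit of the sequence is monotone. -/
theorem value_function_monotone_random
    (K M : ℕ) (hK : 1 ≤ K) (hM1 : 1 ≤ M) (hM2 : M ≤ K)
    (lam rho : Fin K → ℝ) (L Ahb Ahd Ahr : Fin K → ℕ)
    (hlam : ∀ k, 0 < lam k ∧ lam k ≤ 1) (hrho : ∀ k, 0 ≤ rho k ∧ rho k ≤ 1)
    (hL : ∀ k, 2 ≤ L k) (hAb : ∀ k, 1 ≤ Ahb k)
    (hAd : ∀ k, 1 ≤ Ahd k) (hAr : ∀ k, 1 ≤ Ahr k)
    (Xdag : Fin K → S) (hdag : Xdag ∈ jointSpace L Ahb Ahd Ahr)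
    (Vseq : ℕ → (Fin K → S) → ℝ)
    (hinit : ∀ x, Vseq 1 x = 0)
    (hrec : ∀ n, 1 ≤ n → ∀ x, Vseq (n + 1) x =
      (feasible K M).inf' (feasible_nonempty K M)
          (fun w => J lam rho L Ahb Ahd Ahr (Vseq n) x w) -
        (feasible K M).inf' (feasible_nonempty K M)
          (fun w => J lam rho L Ahb Ahd Ahr (Vseq n) Xdag w)) :
    (∀ V : (Fin K → S) → ℝ,
      (∀ x1 ∈ jointSpace L Ahb Ahd Ahr, ∀ x2 ∈ jointSpace L Ahb Ahd Ahr,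
        (∀ k, xleS (x1 k) (x2 k)) → V x1 ≤ V x2) →
      ∀ x1 ∈ jointSpace L Ahb Ahd Ahr, ∀ x2 ∈ jointSpace L Ahb Ahd Ahr,
        (∀ k, xleS (x1 k) (x2 k)) →
          (feasible K M).inf' (feasible_nonempty K M)
              (fun w => J lam rho L Ahb Ahd Ahr V x1 w) ≤
            (feasible K M).inf' (feasible_nonempty K M)
              (fun w => J lam rho L Ahb Ahd Ahr V x2 w)) ∧
    (∀ n, 1 ≤ n → ∀ x1 ∈ jointSpace L Ahb Ahd Ahr,
      ∀ x2 ∈ jointSpace L Ahb Ahd Ahr,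
        (∀ k, xleS (x1 k) (x2 k)) → Vseq n x1 ≤ Vseq n x2) ∧
    (∀ Vlim : (Fin K → S) → ℝ,
      (∀ x, Filter.Tendsto (fun n => Vseq n x) Filter.atTop (nhds (Vlim x))) →
      ∀ x1 ∈ jointSpace L Ahb Ahd Ahr, ∀ x2 ∈ jointSpace L Ahb Ahd Ahr,
        (∀ k, xleS (x1 k) (x2 k)) → Vlim x1 ≤ Vlim x2) := by
  have key : ∀ V : (Fin K → S) → ℝ,
      (∀ x1 ∈ jointSpace L Ahb Ahd Ahr, ∀ x2 ∈ jointSpace L Ahb Ahd Ahr,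
        (∀ k, xleS (x1 k) (x2 k)) → V x1 ≤ V x2) →
      ∀ x1 ∈ jointSpace L Ahb Ahd Ahr, ∀ x2 ∈ jointSpace L Ahb Ahd Ahr,
        (∀ k, xleS (x1 k) (x2 k)) →
          (feasible K M).inf' (feasible_nonempty K M)
              (fun w => J lam rho L Ahb Ahd Ahr V x1 w) ≤
            (feasible K M).inf' (feasible_nonempty K M)
              (fun w => J lam rho L Ahb Ahd Ahr V x2 w) := by
    intro V hV x1 hx1 x2 hx2 hle
    have hJ : ∀ w : Fin K → Act,
        J lam rho L Ahb Ahd Ahr V x1 w ≤ J lam rho L Ahb Ahd Ahr V x2 w := by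
      intro w
      unfold J
      refine add_le_add ?_ ?_
      · exact Finset.sum_le_sum fun k _ => Nat.cast_le.mpr (hle k).2.2.1
      · rw [sum_Pjoint_mul lam rho L Ahb Ahd Ahr hL hAb hAd hAr V hx1 w,
          sum_Pjoint_mul lam rho L Ahb Ahd Ahr hL hAb hAd hAr V hx2 w]
        refine Finset.sum_le_sum fun β _ => ?_
        refine mul_le_mul_of_nonneg_left ?_
          (Finset.prod_nonneg fun k _ =>
            coef_nonneg ⟨le_of_lt (hlam k).1, (hlam k).2⟩ (hrho k) (β k))
        refine hV _ ?_ _ ?_ (fun k => succ_mono _ _ (hle k))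
        · rw [jointSpace, Fintype.mem_piFinset]
          exact fun k => succ_mem (hL k) (hAb k) (hAd k) (hAr k) _ _
            ((Fintype.mem_piFinset.mp hx1) k)
        · rw [jointSpace, Fintype.mem_piFinset]
          exact fun k => succ_mem (hL k) (hAb k) (hAd k) (hAr k) _ _
            ((Fintype.mem_piFinset.mp hx2) k)
    refine Finset.le_inf' _ _ fun w hw => ?_
    exact le_trans (Finset.inf'_le _ hw) (hJ w)
  have mono : ∀ n, 1 ≤ n → ∀ x1 ∈ jointSpace L Ahb Ahd Ahr,
      ∀ x2 ∈ jointSpace L Ahb Ahd Ahr,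
        (∀ k, xleS (x1 k) (x2 k)) → Vseq n x1 ≤ Vseq n x2 := by
    intro n hn
    induction n, hn using Nat.le_induction with
    | base => intro x1 _ x2 _ _; rw [hinit x1, hinit x2]
    | succ n hn ih =>
        intro x1 hx1 x2 hx2 hle
        rw [hrec n hn x1, hrec n hn x2]
        exact sub_le_sub_right (key (Vseq n) ih x1 hx1 x2 hx2 hle) _
  refine ⟨key, mono, ?_⟩
  intro Vlim hV x1 hx1 x2 hx2 hle
  refine le_of_tendsto_of_tendsto (hV x1) (hV x2) ?_
  filter_upwards [Filter.eventually_ge_atTop 1] with n hn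
  exact mono n hn x1 hx1 x2 hx2 hle

end AoIRandom
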